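/- arXiv:2006.04880 — 2 statements merged into one kernel-verified Lean document; each statement's English description precedes it below -/
import Mathlib

section
/- Let A be an m×m complex matrix with ‖A‖ ≥ 1, let σ be a real number with |σ − ‖A/‖A‖_F‖| ≤ ε₁ where ε₁√m < 1, and set α = σ‖A‖_F/(1 − √m ε₁). Then ‖A‖ ≤ α ≤ ((1+√m ε₁)/(1−√m ε₁))·‖A‖. -/
open scoped Matrix.Norms.L2Operator
open Matrix

/-- The Frobenius norm of a complex matrix. -/
noncomputable def frobeniusNorm {m : ℕ} (A : Matrix (Fin m) (Fin m) ℂ) : ℝ :=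
  Real.sqrt (∑ i, ∑ j, ‖A i j‖ ^ 2)

lemma opNorm_le_frob {m : ℕ} (A : Matrix (Fin m) (Fin m) ℂ) : ‖A‖ ≤ frobeniusNorm A := by
  rw [Matrix.l2_opNorm_def]
  apply ContinuousLinearMap.opNorm_le_bound _ (Real.sqrt_nonneg _)
  intro x
  have hx : ((Matrix.toEuclideanLin.trans LinearMap.toContinuousLinearMap A) x : EuclideanSpace ℂ (Fin m)) = Matrix.toEuclideanLin A x := rfl
  rw [hx]
  have key : ∀ i, ‖(Matrix.toEuclideanLin A x) i‖ ^ 2 ≤ (∑ j, ‖A i j‖ ^ 2) * ‖x‖ ^ 2 := by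
    intro i
    set y : EuclideanSpace ℂ (Fin m) := (WithLp.equiv 2 _).symm (fun j => star (A i j)) with hy
    have h1 : (Matrix.toEuclideanLin A x) i = inner ℂ y x := by
      simp [Matrix.toEuclideanLin_apply, Matrix.mulVec, dotProduct,
        EuclideanSpace.inner_eq_star_dotProduct, hy, mul_comm]
    have h2 : ‖(inner ℂ y x : ℂ)‖ ≤ ‖y‖ * ‖x‖ := norm_inner_le_norm y x
    have h3 : ‖y‖ ^ 2 = ∑ j, ‖A i j‖ ^ 2 := by
      rw [EuclideanSpace.norm_eq]
      rw [Real.sq_sqrt (by positivity)]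
      simp [hy]
    rw [h1]
    calc ‖(inner ℂ y x : ℂ)‖ ^ 2 ≤ (‖y‖ * ‖x‖) ^ 2 := by
          apply pow_le_pow_left₀ (norm_nonneg _) h2
      _ = (∑ j, ‖A i j‖ ^ 2) * ‖x‖ ^ 2 := by rw [mul_pow, h3]
  have hn : ‖(Matrix.toEuclideanLin A x : EuclideanSpace ℂ (Fin m))‖ ^ 2 ≤ (∑ i, ∑ j, ‖A i j‖ ^ 2) * ‖x‖ ^ 2 := by
    rw [EuclideanSpace.norm_eq, Real.sq_sqrt (by positivity), Finset.sum_mul]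
    exact Finset.sum_le_sum fun i _ => key i
  calc ‖(Matrix.toEuclideanLin A x : EuclideanSpace ℂ (Fin m))‖
      = Real.sqrt (‖(Matrix.toEuclideanLin A x : EuclideanSpace ℂ (Fin m))‖ ^ 2) :=
        (Real.sqrt_sq (norm_nonneg _)).symm
    _ ≤ Real.sqrt ((∑ i, ∑ j, ‖A i j‖ ^ 2) * ‖x‖ ^ 2) := Real.sqrt_le_sqrt hn
    _ = Real.sqrt (∑ i, ∑ j, ‖A i j‖ ^ 2) * ‖x‖ := by
        rw [Real.sqrt_mul (by positivity), Real.sqrt_sq (norm_nonneg _)]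

lemma frob_le_sqrt_opNorm {m : ℕ} (A : Matrix (Fin m) (Fin m) ℂ) :
    frobeniusNorm A ≤ Real.sqrt m * ‖A‖ := by
  have key : ∀ j : Fin m, (∑ i, ‖A i j‖ ^ 2) ≤ ‖A‖ ^ 2 := by
    intro j
    have h1 := Matrix.l2_opNorm_mulVec A (EuclideanSpace.single j (1 : ℂ))
    rw [EuclideanSpace.norm_single, norm_one, mul_one] at h1
    have h2 : ‖(EuclideanSpace.equiv (Fin m) ℂ).symm (A *ᵥ (EuclideanSpace.single j (1:ℂ)))‖ ^ 2
        = ∑ i, ‖A i j‖ ^ 2 := by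
      rw [EuclideanSpace.norm_eq, Real.sq_sqrt (by positivity)]
      congr 1; ext i
      congr 2
      show (A *ᵥ (EuclideanSpace.single j (1:ℂ) : Fin m → ℂ)) i = A i j
      have : (EuclideanSpace.single j (1:ℂ) : Fin m → ℂ) = Pi.single j 1 := rfl
      rw [this, Matrix.mulVec_single]; simp
    rw [← h2]
    exact pow_le_pow_left₀ (norm_nonneg _) h1 2
  have hsum : (∑ i, ∑ j, ‖A i j‖ ^ 2) ≤ m * ‖A‖ ^ 2 := by
    rw [Finset.sum_comm]
    calc (∑ j : Fin m, ∑ i, ‖A i j‖ ^ 2) ≤ ∑ j : Fin m, ‖A‖ ^ 2 :=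
          Finset.sum_le_sum fun j _ => key j
      _ = m * ‖A‖ ^ 2 := by simp [mul_comm]
  calc frobeniusNorm A ≤ Real.sqrt (m * ‖A‖ ^ 2) := Real.sqrt_le_sqrt hsum
    _ = Real.sqrt m * ‖A‖ := by
        rw [Real.sqrt_mul (by positivity), Real.sqrt_sq (norm_nonneg _)]

theorem spectral_norm_approx {m : ℕ} (A : Matrix (Fin m) (Fin m) ℂ)
    (hA : 1 ≤ ‖A‖) (σ ε₁ : ℝ)
    (hσ : |σ - ‖(frobeniusNorm A)⁻¹ • A‖| ≤ ε₁)
    (hε : ε₁ * Real.sqrt m < 1)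
    (α : ℝ) (hα : α = σ * frobeniusNorm A / (1 - Real.sqrt m * ε₁)) :
    ‖A‖ ≤ α ∧ α ≤ (1 + Real.sqrt m * ε₁) / (1 - Real.sqrt m * ε₁) * ‖A‖ := by
  set N := ‖A‖ with hN
  set F := frobeniusNorm A with hF
  have hNF : N ≤ F := opNorm_le_frob A
  have hFN : F ≤ Real.sqrt m * N := frob_le_sqrt_opNorm A
  have hFpos : 0 < F := lt_of_lt_of_le (lt_of_lt_of_le one_pos hA) hNF
  have he1 : 0 ≤ ε₁ := le_trans (abs_nonneg _) hσ
  have hs : Real.sqrt m * ε₁ < 1 := by rw [mul_comm]; exact hε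
  have h1s : 0 < 1 - Real.sqrt m * ε₁ := by linarith
  have hnorm : ‖F⁻¹ • A‖ = F⁻¹ * N := by
    rw [norm_smul, Real.norm_eq_abs, abs_of_nonneg (inv_nonneg.mpr hFpos.le)]
  rw [hnorm] at hσ
  rw [abs_le] at hσ
  obtain ⟨hlo, hhi⟩ := hσ
  have hinv : F⁻¹ * F = 1 := inv_mul_cancel₀ hFpos.ne'
  have hσFlo : N - ε₁ * F ≤ σ * F := by
    have := mul_le_mul_of_nonneg_right (by linarith : F⁻¹ * N - ε₁ ≤ σ) hFpos.le
    calc N - ε₁ * F = (F⁻¹ * N - ε₁) * F := by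
          rw [sub_mul, mul_comm F⁻¹ N, mul_assoc, hinv, mul_one]
      _ ≤ σ * F := this
  have hσFhi : σ * F ≤ N + ε₁ * F := by
    have := mul_le_mul_of_nonneg_right (by linarith : σ ≤ F⁻¹ * N + ε₁) hFpos.le
    calc σ * F ≤ (F⁻¹ * N + ε₁) * F := this
      _ = N + ε₁ * F := by rw [add_mul, mul_comm F⁻¹ N, mul_assoc, hinv, mul_one]
  have heF : ε₁ * F ≤ Real.sqrt m * ε₁ * N := by
    have := mul_le_mul_of_nonneg_left hFN he1
    linarith [this]
  constructor
  · rw [hα, le_div_iff₀ h1s]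
    nlinarith
  · rw [hα]
    have key : σ * F ≤ (1 + Real.sqrt m * ε₁) * N := by nlinarith
    calc σ * F / (1 - Real.sqrt m * ε₁)
        ≤ (1 + Real.sqrt m * ε₁) * N / (1 - Real.sqrt m * ε₁) :=
          (div_le_div_iff_of_pos_right h1s).mpr key
      _ = (1 + Real.sqrt m * ε₁) / (1 - Real.sqrt m * ε₁) * N := by ring
end

section
/- Every permutation σ of {1,...,m} factors as σ = (1 τ(1))(2 τ(2))⋯(m τ(m)), where τ(i) is the first element of the sequence σ(i), σ²(i), σ³(i), ... that is ≥ i, and (i j) denotes the transposition swapping i and j (with (i i) = identity). -/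
/-- `tau σ i` is the first element of the sequence `σ i, σ² i, σ³ i, …` that is `≥ i`. -/
noncomputable def tau {m : ℕ} (σ : Equiv.Perm (Fin m)) (i : Fin m) : Fin m :=
  (σ ^ Nat.find (⟨orderOf σ, orderOf_pos σ, by simp [pow_orderOf_eq_one]⟩ :
      ∃ k, 0 < k ∧ i ≤ (σ ^ k) i)) i

lemma tau_def {m : ℕ} (σ : Equiv.Perm (Fin m)) (i : Fin m)
    (h : ∃ k, 0 < k ∧ i ≤ (σ ^ k) i) : tau σ i = (σ ^ Nat.find h) i := rfl

lemma tau_eq {m : ℕ} (σ : Equiv.Perm (Fin m)) (i : Fin m) {k : ℕ}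
    (hk : 0 < k) (hik : i ≤ (σ ^ k) i)
    (hmin : ∀ l, 0 < l → l < k → (σ ^ l) i < i) : tau σ i = (σ ^ k) i := by
  have h : ∃ k, 0 < k ∧ i ≤ (σ ^ k) i := ⟨k, hk, hik⟩
  rw [tau_def σ i h]
  have : Nat.find h = k := by
    rw [Nat.find_eq_iff]
    exact ⟨⟨hk, hik⟩, fun l hl hc => absurd hc.2 (not_le.2 (hmin l hc.1 hl))⟩
  rw [this]

lemma tau_exists {m : ℕ} (σ : Equiv.Perm (Fin m)) (i : Fin m) :
    ∃ k, 0 < k ∧ (σ ^ k) i = tau σ i ∧ i ≤ tau σ i ∧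
      ∀ l, 0 < l → l < k → (σ ^ l) i < i := by
  have h : ∃ k, 0 < k ∧ i ≤ (σ ^ k) i :=
    ⟨orderOf σ, orderOf_pos σ, by simp [pow_orderOf_eq_one]⟩
  refine ⟨Nat.find h, (Nat.find_spec h).1, (tau_def σ i h).symm, ?_, ?_⟩
  · rw [tau_def σ i h]; exact (Nat.find_spec h).2
  · intro l hl hlk
    exact lt_of_not_ge (fun hle => Nat.find_min h hlk ⟨hl, hle⟩)

/-- index sequence tracking the orbit of `i` under `swap a (σ a) * σ` inside the orbit under `σ`. -/
def hseq {m : ℕ} (σ : Equiv.Perm (Fin m)) (a i : Fin m) : ℕ → ℕ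
  | 0 => 0
  | k+1 => if σ ((σ ^ hseq σ a i k) i) = a then hseq σ a i k + 2 else hseq σ a i k + 1

lemma hseq_mono {m : ℕ} (σ : Equiv.Perm (Fin m)) (a i : Fin m) :
    StrictMono (hseq σ a i) := by
  apply strictMono_nat_of_lt_succ
  intro k
  by_cases h : σ ((σ ^ hseq σ a i k) i) = a <;> simp [hseq, h]

lemma hseq_ge {m : ℕ} (σ : Equiv.Perm (Fin m)) (a i : Fin m) (k : ℕ) :
    k ≤ hseq σ a i k := by
  induction k with
  | zero => simp [hseq]
  | succ k ih =>
    have := hseq_mono σ a i (show k < k + 1 by omega)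
    omega

lemma hseq_cover {m : ℕ} (σ : Equiv.Perm (Fin m)) (a i : Fin m) (k l : ℕ)
    (hl : l ≤ hseq σ a i k) :
    (σ ^ l) i = a ∨ ∃ k' ≤ k, hseq σ a i k' = l := by
  induction k with
  | zero => right; exact ⟨0, le_refl 0, by simpa [hseq] using (Nat.le_zero.mp (by simpa [hseq] using hl)).symm⟩
  | succ k ih =>
    by_cases hc : l ≤ hseq σ a i k
    · rcases ih hc with h | ⟨k', hk', he⟩
      · left; exact h
      · right; exact ⟨k', le_trans hk' (Nat.le_succ k), he⟩
    · push_neg at hc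
      by_cases hs : σ ((σ ^ hseq σ a i k) i) = a
      · have he : hseq σ a i (k+1) = hseq σ a i k + 2 := by simp [hseq, hs]
        rw [he] at hl
        rcases (by omega : l = hseq σ a i k + 1 ∨ l = hseq σ a i k + 2) with h1 | h2
        · left
          rw [h1, pow_succ', Equiv.Perm.mul_apply]
          exact hs
        · right; exact ⟨k+1, le_refl _, by rw [he, h2]⟩
      · have he : hseq σ a i (k+1) = hseq σ a i k + 1 := by simp [hseq, hs]
        rw [he] at hl
        have : l = hseq σ a i k + 1 := by omega
        right; exact ⟨k+1, le_refl _, by rw [he, this]⟩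

lemma hseq_orbit {m : ℕ} (σ : Equiv.Perm (Fin m)) (a i : Fin m) (hia : i ≠ a)
    (hb : σ a ≠ a) (k : ℕ) :
    ((Equiv.swap a (σ a) * σ) ^ k) i = (σ ^ hseq σ a i k) i ∧ (σ ^ hseq σ a i k) i ≠ a := by
  set σ' := Equiv.swap a (σ a) * σ with hσ'
  induction k with
  | zero => simpa [hseq] using hia
  | succ k ih =>
    obtain ⟨ih1, ih2⟩ := ih
    set x := (σ ^ hseq σ a i k) i with hx
    have hstep : (σ' ^ (k+1)) i = σ' x := by
      rw [pow_succ', Equiv.Perm.mul_apply, ih1]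
    have happ : σ' x = Equiv.swap a (σ a) (σ x) := rfl
    by_cases hs : σ x = a
    · have he : hseq σ a i (k+1) = hseq σ a i k + 2 := by simp only [hseq]; exact if_pos hs
      have hx2 : (σ ^ hseq σ a i (k+1)) i = σ (σ x) := by
        rw [he]
        rw [show hseq σ a i k + 2 = (hseq σ a i k + 1) + 1 from rfl]
        rw [pow_succ', Equiv.Perm.mul_apply, pow_succ', Equiv.Perm.mul_apply]
      constructor
      · rw [hstep, happ, hs, Equiv.swap_apply_left, hx2, hs]
      · rw [hx2, hs]
        exact hb
    · have he : hseq σ a i (k+1) = hseq σ a i k + 1 := by simp only [hseq]; exact if_neg hs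
      have hx2 : (σ ^ hseq σ a i (k+1)) i = σ x := by
        rw [he, pow_succ', Equiv.Perm.mul_apply]
      have hxb : σ x ≠ σ a := fun h => ih2 (σ.injective h)
      constructor
      · rw [hstep, happ, Equiv.swap_apply_of_ne_of_ne hs hxb, hx2]
      · rw [hx2]; exact hs

/-- Key lemma: multiplying by `swap a (σ a)` on the left does not change `tau` at points above `a`. -/
lemma tau_swap_mul {m : ℕ} (σ : Equiv.Perm (Fin m)) (a i : Fin m) (hai : a < i) :
    tau (Equiv.swap a (σ a) * σ) i = tau σ i := by
  by_cases hb : σ a = a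
  · rw [hb, Equiv.swap_self]
    rw [Equiv.Perm.refl_mul]
  · obtain ⟨k0, hk0, hpow, hge, hmin⟩ := tau_exists σ i
    have hne : (σ ^ k0) i ≠ a := by
      intro h
      rw [h] at hpow
      rw [← hpow] at hge
      exact absurd hge (not_le.2 hai)
    -- find k' with hseq ... k' = k0
    have hcov := hseq_cover σ a i k0 k0 (hseq_ge σ a i k0)
    rcases hcov with h | ⟨k', hk'le, hk'⟩
    · exact absurd h hne
    have hk'pos : 0 < k' := by
      rcases Nat.eq_zero_or_pos k' with h0 | h; · rw [h0] at hk'; simp [hseq] at hk'; omega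
      exact h
    have horb := hseq_orbit σ a i (by exact fun h => absurd h (by intro he; rw [he] at hai; exact lt_irrefl a hai)) hb
    have heq : ((Equiv.swap a (σ a) * σ) ^ k') i = (σ ^ k0) i := by
      rw [(horb k').1, hk']
    rw [tau_eq (Equiv.swap a (σ a) * σ) i hk'pos (by rw [heq, hpow]; exact hge) ?min, heq, hpow]
    case min =>
      intro l hl hlk
      rw [(horb l).1]
      apply hmin
      · exact lt_of_lt_of_le hl (hseq_ge σ a i l)
      · rw [← hk']
        exact hseq_mono σ a i hlk

lemma main_lemma {m : ℕ} : ∀ n j, j + n = m → ∀ σ : Equiv.Perm (Fin m),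
    (∀ k : Fin m, (k : ℕ) < j → σ k = k) →
    σ = ((List.ofFn fun i => Equiv.swap i (tau σ i)).drop j).prod := by
  intro n
  induction n with
  | zero =>
    intro j hj σ hfix
    have hlen : (List.ofFn fun i => Equiv.swap i (tau σ i)).length = m := by simp
    rw [List.drop_eq_nil_of_le (by omega), List.prod_nil]
    ext k
    rw [hfix k (by omega)]
    rfl
  | succ n ih =>
    intro j hj σ hfix
    have hjm : j < m := by omega
    set jf : Fin m := ⟨j, hjm⟩ with hjf
    have hble : jf ≤ σ jf := by
      by_contra h
      push_neg at h
      have h2 : ((σ jf : Fin m) : ℕ) < j := h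
      have := hfix (σ jf) h2
      have := σ.injective this
      rw [this] at h
      exact lt_irrefl _ h
    have htau : tau σ jf = σ jf := by
      rw [tau_eq σ jf Nat.one_pos (by simpa using hble) (fun l hl hl1 => by omega)]
      simp
    set σ' := Equiv.swap jf (σ jf) * σ with hσ'
    have hfix' : ∀ k : Fin m, (k : ℕ) < j + 1 → σ' k = k := by
      intro k hk
      rcases Nat.lt_or_ge (k : ℕ) j with h | h
      · have h1 : σ k = k := hfix k h
        have hk1 : k ≠ jf := fun hc => by rw [hc] at h; exact lt_irrefl _ h
        have hk2 : k ≠ σ jf := by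
          intro hc
          have h3 : σ k = σ jf := by rw [h1, hc]
          have h4 : k = jf := σ.injective h3
          rw [h4] at h
          exact lt_irrefl _ h
        rw [hσ', Equiv.Perm.mul_apply, h1, Equiv.swap_apply_of_ne_of_ne hk1 hk2]
      · have hkj : k = jf := by
          apply Fin.ext
          simp only [hjf]
          omega
        rw [hkj, hσ', Equiv.Perm.mul_apply, Equiv.swap_apply_right]
    have hrec := ih (j+1) (by omega) σ' hfix'
    -- tau agrees above j
    have htaueq : ∀ i : Fin m, j < (i : ℕ) → tau σ' i = tau σ i := by
      intro i hi
      exact tau_swap_mul σ jf i (by exact hi)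
    -- list manipulation
    have hlen : (List.ofFn fun i : Fin m => Equiv.swap i (tau σ i)).length = m := by simp
    have hdrop : (List.ofFn fun i : Fin m => Equiv.swap i (tau σ i)).drop j =
        Equiv.swap jf (tau σ jf) ::
          (List.ofFn fun i : Fin m => Equiv.swap i (tau σ i)).drop (j+1) := by
      rw [List.drop_eq_getElem_cons (by omega)]
      congr 1
      rw [List.getElem_ofFn]
    have htail : (List.ofFn fun i : Fin m => Equiv.swap i (tau σ' i)).drop (j+1) =
        (List.ofFn fun i : Fin m => Equiv.swap i (tau σ i)).drop (j+1) := by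
      apply List.ext_getElem
      · simp
      · intro p h1 h2
        rw [List.getElem_drop, List.getElem_drop, List.getElem_ofFn, List.getElem_ofFn]
        congr 1
        exact htaueq _ (show j < j + 1 + p by omega)
    rw [hdrop, List.prod_cons, ← htail, ← hrec, htau, hσ']
    rw [← mul_assoc, Equiv.swap_mul_self, one_mul]

/-- Every permutation `σ` of `Fin m` factors as
`σ = (0 τ(0)) (1 τ(1)) ⋯ (m-1 τ(m-1))`, where in each transposition `(i τ(i))`
the factor with smaller index `i` is applied first. -/
theorem perm_eq_prod_swaps_tau {m : ℕ} (σ : Equiv.Perm (Fin m)) :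
    σ = (List.ofFn fun i => Equiv.swap i (tau σ i)).prod := by
  have := main_lemma m 0 (by omega) σ (fun k hk => absurd hk (by omega))
  simpa using this
end
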